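/- For all x > 0, the Gaussian Q-function satisfies Q(x) = (1/√(2π))∫_x^∞ e^{−z²/2} dz ≤ (1/√(2π)) ((x²+2)/(x(x²+3))) e^{−x²/2}. -/

import Mathlib

open Real MeasureTheory Filter

noncomputable def g (y : ℝ) : ℝ := (y ^ 2 + 2) / (y * (y ^ 2 + 3)) * Real.exp (-y ^ 2 / 2)

lemma g_deriv (y : ℝ) (hy : 0 < y) :
    HasDerivAt g (-((1 + 6 / (y * (y ^ 2 + 3)) ^ 2) * Real.exp (-y ^ 2 / 2))) y := by
  have hden : y * (y ^ 2 + 3) ≠ 0 := by positivity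
  have hnum : HasDerivAt (fun y : ℝ => y ^ 2 + 2) (2 * y) y := by
    simpa using (hasDerivAt_pow 2 y).add_const 2
  have hd : HasDerivAt (fun y : ℝ => y * (y ^ 2 + 3)) (1 * (y ^ 2 + 3) + y * (2 * y)) y := by
    have := (hasDerivAt_id y).mul ((hasDerivAt_pow 2 y).add_const 3)
    exact this.congr_deriv (by norm_num)
  have h1 := hnum.div hd hden
  have h2 : HasDerivAt (fun y : ℝ => Real.exp (-y ^ 2 / 2)) (-y * Real.exp (-y ^ 2 / 2)) y := by
    have : HasDerivAt (fun y : ℝ => -y ^ 2 / 2) (-y) y := by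
      simpa using (((hasDerivAt_pow 2 y).neg).div_const 2).congr_deriv (by ring)
    simpa [mul_comm] using this.exp
  have := h1.mul h2
  refine this.congr_deriv ?_
  have hy0 : y ≠ 0 := hy.ne'
  have hy3 : y ^ 2 + 3 ≠ 0 := by positivity
  simp only [Pi.div_apply]
  field_simp
  ring

lemma g_tendsto : Tendsto g atTop (nhds 0) := by
  have hexp : Tendsto (fun y : ℝ => Real.exp (-y ^ 2 / 2)) atTop (nhds 0) := by
    apply Real.tendsto_exp_atBot.comp
    have h : Tendsto (fun y : ℝ => y ^ 2 / 2) atTop atTop :=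
      (tendsto_pow_atTop (by norm_num)).atTop_div_const (by norm_num)
    simp only [neg_div]
    exact tendsto_neg_atTop_atBot.comp h
  apply squeeze_zero_norm' _ hexp
  filter_upwards [eventually_ge_atTop (1 : ℝ)] with y hy
  have hy0 : 0 < y := by linarith
  have hfrac : (y ^ 2 + 2) / (y * (y ^ 2 + 3)) ≤ 1 := by
    rw [div_le_one (by positivity)]
    nlinarith
  have hfrac0 : 0 ≤ (y ^ 2 + 2) / (y * (y ^ 2 + 3)) := by positivity
  rw [g, Real.norm_eq_abs, abs_of_nonneg (by positivity)]
  nlinarith [Real.exp_pos (-y ^ 2 / 2)]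

theorem stmt_13 (x : ℝ) (hx : 0 < x) :
    (1 / Real.sqrt (2 * π)) * ∫ z in Set.Ioi x, Real.exp (-z ^ 2 / 2) ≤
      (1 / Real.sqrt (2 * π)) * ((x ^ 2 + 2) / (x * (x ^ 2 + 3))) *
        Real.exp (-x ^ 2 / 2) := by
  have hgauss : Integrable (fun z : ℝ => Real.exp (-z ^ 2 / 2)) := by
    have := integrable_exp_neg_mul_sq (b := (1/2 : ℝ)) (by norm_num)
    convert this using 2 with z
    ring_nf
  have hint1 : IntegrableOn (fun z : ℝ => Real.exp (-z ^ 2 / 2)) (Set.Ioi x) :=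
    hgauss.integrableOn
  have hint2 : IntegrableOn
      (fun z : ℝ => (1 + 6 / (z * (z ^ 2 + 3)) ^ 2) * Real.exp (-z ^ 2 / 2)) (Set.Ioi x) := by
    have hC : ∀ z ∈ Set.Ioi x,
        ‖(1 + 6 / (z * (z ^ 2 + 3)) ^ 2) * Real.exp (-z ^ 2 / 2)‖ ≤
        (1 + 6 / (x * (x ^ 2 + 3)) ^ 2) * Real.exp (-z ^ 2 / 2) := by
      intro z hz
      have hz0 : x < z := hz
      have hzx : 0 < z := lt_trans hx hz0
      rw [Real.norm_eq_abs, abs_of_nonneg (by positivity)]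
      have : 6 / (z * (z ^ 2 + 3)) ^ 2 ≤ 6 / (x * (x ^ 2 + 3)) ^ 2 := by
        have hle : x * (x ^ 2 + 3) ≤ z * (z ^ 2 + 3) := by
          nlinarith [mul_pos hx hzx, sq_nonneg (z - x), sq_nonneg (z + x)]
        apply div_le_div_of_nonneg_left (by norm_num) (by positivity)
        exact pow_le_pow_left₀ (by positivity) hle 2
      nlinarith [Real.exp_pos (-z ^ 2 / 2)]
    apply Integrable.mono' ((hgauss.integrableOn).const_mul (1 + 6 / (x * (x ^ 2 + 3)) ^ 2))
    · apply ContinuousOn.aestronglyMeasurable _ measurableSet_Ioi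
      apply ContinuousOn.mul _ (Continuous.continuousOn (by continuity))
      apply ContinuousOn.add continuousOn_const
      apply ContinuousOn.div continuousOn_const
      · fun_prop
      · intro z hz
        have : 0 < z := lt_trans hx hz
        positivity
    · exact ae_restrict_iff' measurableSet_Ioi |>.2 (Filter.Eventually.of_forall hC)
  have hFTC : ∫ z in Set.Ioi x,
      (-((1 + 6 / (z * (z ^ 2 + 3)) ^ 2) * Real.exp (-z ^ 2 / 2))) = 0 - g x := by
    apply integral_Ioi_of_hasDerivAt_of_tendsto
    · apply ContinuousAt.continuousWithinAt
      have hden : x * (x ^ 2 + 3) ≠ 0 := by positivity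
      apply ContinuousAt.mul
      · exact ContinuousAt.div (by fun_prop) (by fun_prop) hden
      · fun_prop
    · intro z hz
      exact g_deriv z (lt_trans hx hz)
    · exact hint2.neg
    · exact g_tendsto
  have key : ∫ z in Set.Ioi x, Real.exp (-z ^ 2 / 2) ≤
      (x ^ 2 + 2) / (x * (x ^ 2 + 3)) * Real.exp (-x ^ 2 / 2) := by
    have heq : (x ^ 2 + 2) / (x * (x ^ 2 + 3)) * Real.exp (-x ^ 2 / 2) =
        ∫ z in Set.Ioi x, (1 + 6 / (z * (z ^ 2 + 3)) ^ 2) * Real.exp (-z ^ 2 / 2) := by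
      have := hFTC
      rw [integral_neg] at this
      have : ∫ z in Set.Ioi x, (1 + 6 / (z * (z ^ 2 + 3)) ^ 2) * Real.exp (-z ^ 2 / 2) = g x := by
        linarith
      rw [this, g]
    rw [heq]
    apply setIntegral_mono_on hint1 hint2 measurableSet_Ioi
    intro z hz
    have hz0 : 0 < z := lt_trans hx hz
    nlinarith [Real.exp_pos (-z ^ 2 / 2), sq_nonneg (z * (z ^ 2 + 3)),
      div_nonneg (by norm_num : (0:ℝ) ≤ 6) (sq_nonneg (z * (z ^ 2 + 3)))]
  have hs : 0 < 1 / Real.sqrt (2 * π) := by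
    positivity
  calc (1 / Real.sqrt (2 * π)) * ∫ z in Set.Ioi x, Real.exp (-z ^ 2 / 2)
      ≤ (1 / Real.sqrt (2 * π)) * ((x ^ 2 + 2) / (x * (x ^ 2 + 3)) * Real.exp (-x ^ 2 / 2)) :=
        mul_le_mul_of_nonneg_left key hs.le
    _ = _ := by ring
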